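/- Let (X,d) and (X',d') be compact metric spaces, φ : X → X and ψ : X' → X' continuous maps, and suppose ψ is a factor of φ, i.e. there exists a continuous surjective map h : X → X' with ψ ∘ h = h ∘ φ. Then C(φ) ≥ C(ψ), C̲(φ) ≥ C̲(ψ), and C*(φ) ≥ C*(ψ). -/

import Mathlib

open Filter Set Metric
open scoped ENNReal Topology

/-- The dynamical distance of order `n` associated with the map `φ`:
`d_n^φ(x,y) = max_{0 ≤ k ≤ n-1} d(φ^k x, φ^k y)`. -/
noncomputable def dynDist {X : Type*} [MetricSpace X] (φ : X → X) (n : ℕ) (x y : X) : ℝ :=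
  ⨆ k : Fin n, dist (φ^[(k : ℕ)] x) (φ^[(k : ℕ)] y)

/-- The open `(n,ε)`-ball centered at `x` for the dynamical distance `d_n^φ`. -/
def dynBall {X : Type*} [MetricSpace X] (φ : X → X) (n : ℕ) (x : X) (ε : ℝ) : Set X :=
  {y | dynDist φ n x y < ε}

/-- `G_n(Y,ε)`: the minimal number of `(n,ε)`-balls (centers anywhere in `X`)
needed to cover `Y`. -/
noncomputable def coverNum {X : Type*} [MetricSpace X] (φ : X → X) (n : ℕ) (Y : Set X)
    (ε : ℝ) : ℕ :=
  sInf {m : ℕ | ∃ t : Finset X, t.card = m ∧ Y ⊆ ⋃ x ∈ t, dynBall φ n x ε}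

/-- The (upper) complexity index `C(φ,Y) = sup_{ε>0} limsup_n log G_n(Y,ε) / log n`. -/
noncomputable def upperComplexity {X : Type*} [MetricSpace X] (φ : X → X) (Y : Set X) : ℝ≥0∞ :=
  ⨆ (ε : ℝ) (_ : 0 < ε),
    Filter.limsup
      (fun n : ℕ => ENNReal.ofReal (Real.log (coverNum φ n Y ε) / Real.log n)) Filter.atTop

/-- The lower complexity index `C̲(φ,Y) = sup_{ε>0} liminf_n log G_n(Y,ε) / log n`. -/
noncomputable def lowerComplexity {X : Type*} [MetricSpace X] (φ : X → X) (Y : Set X) : ℝ≥0∞ :=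
  ⨆ (ε : ℝ) (_ : 0 < ε),
    Filter.liminf
      (fun n : ℕ => ENNReal.ofReal (Real.log (coverNum φ n Y ε) / Real.log n)) Filter.atTop

/-- The weight `M(C,s) = Σ_i (1/n_i)^s` of a (countable) family of dynamical balls, the
family being encoded as a set of pairs `(center, order)`. -/
noncomputable def coverWeight {X : Type*} [MetricSpace X] (s : ℝ) (S : Set (X × ℕ)) : ℝ≥0∞ :=
  ∑' p : S, ((p : X × ℕ).2 : ℝ≥0∞)⁻¹ ^ s

/-- A covering of `Y` of order `≥ N` at scale `ε`: a countable family of `(n_i,ε)`-balls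
with all `n_i ≥ N` whose union contains `Y`. -/
def IsDynCover {X : Type*} [MetricSpace X] (φ : X → X) (Y : Set X) (ε : ℝ) (N : ℕ)
    (S : Set (X × ℕ)) : Prop :=
  S.Countable ∧ (∀ p ∈ S, N ≤ p.2) ∧ Y ⊆ ⋃ p ∈ S, dynBall φ p.2 p.1 ε

/-- `δ(Y,ε,s,N)`: the infimum of the weights of coverings of `Y` of order `≥ N`. -/
noncomputable def dynDelta {X : Type*} [MetricSpace X] (φ : X → X) (Y : Set X) (ε s : ℝ)
    (N : ℕ) : ℝ≥0∞ :=
  ⨅ (S : Set (X × ℕ)) (_ : IsDynCover φ Y ε N S), coverWeight s S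

/-- `Δ(Y,ε,s) = sup_{N ≥ 1} δ(Y,ε,s,N)`. -/
noncomputable def dynDeltaSup {X : Type*} [MetricSpace X] (φ : X → X) (Y : Set X)
    (ε s : ℝ) : ℝ≥0∞ :=
  ⨆ (N : ℕ) (_ : 1 ≤ N), dynDelta φ Y ε s N

/-- The critical value `s_c(Y,ε) = inf {s ≥ 0 | Δ(Y,ε,s) = 0}`, as an element of `[0,∞]`
(with `inf ∅ = +∞`). -/
noncomputable def critVal {X : Type*} [MetricSpace X] (φ : X → X) (Y : Set X) (ε : ℝ) : ℝ≥0∞ :=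
  sInf {c : ℝ≥0∞ | ∃ s : ℝ, 0 ≤ s ∧ c = ENNReal.ofReal s ∧ dynDeltaSup φ Y ε s = 0}

/-- The weak complexity index `C*(φ,Y) = sup_{ε>0} s_c(Y,ε)`. -/
noncomputable def weakComplexity {X : Type*} [MetricSpace X] (φ : X → X) (Y : Set X) : ℝ≥0∞ :=
  ⨆ (ε : ℝ) (_ : 0 < ε), critVal φ Y ε

section Aux

variable {X : Type*} [MetricSpace X]

lemma dist_le_dynDist (φ : X → X) {n : ℕ} (k : Fin n) (x y : X) :
    dist (φ^[(k : ℕ)] x) (φ^[(k : ℕ)] y) ≤ dynDist φ n x y := by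
  unfold dynDist
  exact le_ciSup (f := fun k : Fin n => dist (φ^[(k : ℕ)] x) (φ^[(k : ℕ)] y))
    ((Set.finite_range _).bddAbove) k

lemma dynDist_lt_of_forall {φ : X → X} {n : ℕ} {x y : X} {ε : ℝ} (hε : 0 < ε)
    (H : ∀ k : Fin n, dist (φ^[(k : ℕ)] x) (φ^[(k : ℕ)] y) ≤ ε / 2) :
    dynDist φ n x y < ε := by
  rcases Nat.eq_zero_or_pos n with rfl | hn
  · simpa [dynDist, Real.iSup_of_isEmpty] using hε
  · haveI : Nonempty (Fin n) := ⟨⟨0, hn⟩⟩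
    calc dynDist φ n x y ≤ ε / 2 := ciSup_le H
      _ < ε := by linarith

lemma dynDist_lt_iff {φ : X → X} {n : ℕ} {x y : X} {ε : ℝ} (hε : 0 < ε) :
    dynDist φ n x y < ε ↔ ∀ k : Fin n, dist (φ^[(k : ℕ)] x) (φ^[(k : ℕ)] y) < ε := by
  constructor
  · exact fun H k => lt_of_le_of_lt (dist_le_dynDist φ k x y) H
  · intro H
    rcases Nat.eq_zero_or_pos n with rfl | hn
    · simpa [dynDist, Real.iSup_of_isEmpty] using hε
    · haveI : Nonempty (Fin n) := ⟨⟨0, hn⟩⟩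
      obtain ⟨i, hi⟩ := Finite.exists_max
        (fun k : Fin n => dist (φ^[(k : ℕ)] x) (φ^[(k : ℕ)] y))
      exact lt_of_le_of_lt (ciSup_le hi) (H i)

lemma mem_dynBall_self {φ : X → X} {n : ℕ} {x : X} {ε : ℝ} (hε : 0 < ε) :
    x ∈ dynBall φ n x ε := by
  show dynDist φ n x x < ε
  exact dynDist_lt_of_forall hε (fun k => by simp [dist_self]; linarith)

lemma isOpen_dynBall {φ : X → X} (hφ : Continuous φ) {n : ℕ} (x : X) {ε : ℝ} (hε : 0 < ε) :
    IsOpen (dynBall φ n x ε) := by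
  have heq : dynBall φ n x ε = ⋂ k : Fin n, (φ^[(k : ℕ)]) ⁻¹' Metric.ball (φ^[(k : ℕ)] x) ε := by
    ext y
    simp only [dynBall, Set.mem_setOf_eq, Set.mem_iInter, Set.mem_preimage, Metric.mem_ball,
      dynDist_lt_iff hε]
    constructor
    · intro H k; rw [dist_comm]; exact H k
    · intro H k; rw [dist_comm]; exact H k
  rw [heq]
  exact isOpen_iInter_of_finite fun k => Metric.isOpen_ball.preimage (hφ.iterate _)

lemma coverNum_exists [CompactSpace X] {φ : X → X} (hφ : Continuous φ) (n : ℕ) {ε : ℝ}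
    (hε : 0 < ε) :
    ∃ t : Finset X, t.card = coverNum φ n Set.univ ε ∧
      Set.univ ⊆ ⋃ x ∈ t, dynBall φ n x ε := by
  have hne : {m : ℕ | ∃ t : Finset X, t.card = m ∧
      Set.univ ⊆ ⋃ x ∈ t, dynBall φ n x ε}.Nonempty := by
    obtain ⟨t, ht⟩ := isCompact_univ.elim_finite_subcover (fun x : X => dynBall φ n x ε)
      (fun x => isOpen_dynBall hφ x hε)
      (fun x _ => Set.mem_iUnion.2 ⟨x, mem_dynBall_self hε⟩)
    exact ⟨t.card, t, rfl, ht⟩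
  exact Nat.sInf_mem hne

lemma logdiv_mono {a b : ℕ} (hab : a ≤ b) (n : ℕ) :
    ENNReal.ofReal (Real.log a / Real.log n) ≤ ENNReal.ofReal (Real.log b / Real.log n) := by
  apply ENNReal.ofReal_le_ofReal
  have hlog : Real.log a ≤ Real.log b := by
    rcases Nat.eq_zero_or_pos a with rfl | ha
    · rcases Nat.eq_zero_or_pos b with rfl | hb
      · simp
      · simpa using Real.log_nonneg (by exact_mod_cast hb)
    · exact Real.log_le_log (by exact_mod_cast ha) (by exact_mod_cast hab)
  have hn : 0 ≤ Real.log n := by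
    rcases Nat.eq_zero_or_pos n with rfl | hn
    · simp
    · exact Real.log_nonneg (by exact_mod_cast hn)
  rw [div_eq_mul_inv, div_eq_mul_inv]
  exact mul_le_mul_of_nonneg_right hlog (inv_nonneg.mpr hn)

end Aux

section Factor

variable {X X' : Type*} [MetricSpace X] [MetricSpace X']
variable {φ : X → X} {ψ : X' → X'} {h : X → X'}

lemma iterate_semiconj (hcomm : ψ ∘ h = h ∘ φ) (k : ℕ) (x : X) :
    ψ^[k] (h x) = h (φ^[k] x) := by
  induction k generalizing x with
  | zero => simp
  | succ k ih =>
      rw [Function.iterate_succ_apply, Function.iterate_succ_apply]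
      rw [show ψ (h x) = h (φ x) from congrFun hcomm x]
      exact ih (φ x)

lemma dynBall_map (hcomm : ψ ∘ h = h ∘ φ) {ε δ : ℝ} (hε : 0 < ε)
    (hδmod : ∀ a b : X, dist a b < δ → dist (h a) (h b) < ε / 2)
    {n : ℕ} {x y : X} (hy : dynDist φ n x y < δ) : dynDist ψ n (h x) (h y) < ε := by
  apply dynDist_lt_of_forall hε
  intro k
  rw [iterate_semiconj hcomm, iterate_semiconj hcomm]
  exact (hδmod _ _ (lt_of_le_of_lt (dist_le_dynDist φ k x y) hy)).le

lemma coverNum_factor [CompactSpace X] (hφ : Continuous φ)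
    (hsurj : Function.Surjective h) (hcomm : ψ ∘ h = h ∘ φ) {ε δ : ℝ} (hε : 0 < ε)
    (hδ0 : 0 < δ) (hδmod : ∀ a b : X, dist a b < δ → dist (h a) (h b) < ε / 2) (n : ℕ) :
    coverNum ψ n Set.univ ε ≤ coverNum φ n Set.univ δ := by
  classical
  obtain ⟨t, htcard, htcov⟩ := coverNum_exists hφ n hδ0
  have hmem : (t.image h).card ∈ {m : ℕ | ∃ t' : Finset X', t'.card = m ∧
      Set.univ ⊆ ⋃ x ∈ t', dynBall ψ n x ε} := by
    refine ⟨t.image h, rfl, ?_⟩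
    rintro y' -
    obtain ⟨y, rfl⟩ := hsurj y'
    obtain ⟨x, hxt, hyx⟩ := Set.mem_iUnion₂.1 (htcov (Set.mem_univ y))
    exact Set.mem_iUnion₂.2 ⟨h x, Finset.mem_image_of_mem h hxt, dynBall_map hcomm hε hδmod hyx⟩
  calc coverNum ψ n Set.univ ε ≤ (t.image h).card := Nat.sInf_le hmem
    _ ≤ t.card := Finset.card_image_le
    _ = coverNum φ n Set.univ δ := htcard

lemma dynDelta_factor (hsurj : Function.Surjective h) (hcomm : ψ ∘ h = h ∘ φ) {ε δ : ℝ}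
    (hε : 0 < ε) (hδmod : ∀ a b : X, dist a b < δ → dist (h a) (h b) < ε / 2) (s : ℝ) (N : ℕ) :
    dynDelta ψ Set.univ ε s N ≤ dynDelta φ Set.univ δ s N := by
  refine le_iInf₂ fun S hS => ?_
  classical
  set S' : Set (X' × ℕ) := (Prod.map h id) '' S with hS'def
  have hcov' : IsDynCover ψ Set.univ ε N S' := by
    refine ⟨hS.1.image _, ?_, ?_⟩
    · rintro p' ⟨p, hp, rfl⟩
      exact hS.2.1 p hp
    · rintro y' -
      obtain ⟨y, rfl⟩ := hsurj y'
      obtain ⟨p, hp, hyp⟩ := Set.mem_iUnion₂.1 (hS.2.2 (Set.mem_univ y))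
      exact Set.mem_iUnion₂.2 ⟨Prod.map h id p, Set.mem_image_of_mem _ hp,
        dynBall_map hcomm hε hδmod hyp⟩
  refine le_trans (iInf₂_le S' hcov') ?_
  have hj : ∀ q : S', ∃ p : S, Prod.map h id (p : X × ℕ) = (q : X' × ℕ) := by
    rintro ⟨q, hq⟩
    obtain ⟨p, hp, hpq⟩ := hq
    exact ⟨⟨p, hp⟩, hpq⟩
  choose j hjspec using hj
  have hjinj : Function.Injective j := by
    intro q1 q2 hq
    apply Subtype.ext
    rw [← hjspec q1, ← hjspec q2, hq]
  calc coverWeight s S' = ∑' q : S', ((((q : X' × ℕ)).2 : ℝ≥0∞))⁻¹ ^ s := rfl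
    _ = ∑' q : S', (((j q : X × ℕ)).2 : ℝ≥0∞)⁻¹ ^ s := by
        refine tsum_congr fun q => ?_
        have h2 : ((j q : X × ℕ)).2 = ((q : X' × ℕ)).2 := congrArg Prod.snd (hjspec q)
        rw [h2]
    _ ≤ ∑' p : S, (((p : X × ℕ)).2 : ℝ≥0∞)⁻¹ ^ s :=
        ENNReal.tsum_comp_le_tsum_of_injective hjinj _
    _ = coverWeight s S := rfl

end Factor

/-- if `ψ` is a factor of `φ` then `C(φ) ≥ C(ψ)`, `C̲(φ) ≥ C̲(ψ)` and
`C*(φ) ≥ C*(ψ)`. -/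
theorem complexity_factor {X X' : Type*}
    [MetricSpace X] [CompactSpace X] [MetricSpace X'] [CompactSpace X']
    (φ : X → X) (hφ : Continuous φ) (ψ : X' → X') (hψ : Continuous ψ)
    (h : X → X') (hc : Continuous h) (hsurj : Function.Surjective h)
    (hcomm : ψ ∘ h = h ∘ φ) :
    upperComplexity ψ Set.univ ≤ upperComplexity φ Set.univ ∧
    lowerComplexity ψ Set.univ ≤ lowerComplexity φ Set.univ ∧
    weakComplexity ψ Set.univ ≤ weakComplexity φ Set.univ := by
  have huc := Metric.uniformContinuous_iff.mp (CompactSpace.uniformContinuous_of_continuous hc)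
  refine ⟨?_, ?_, ?_⟩
  · refine iSup₂_le fun ε hε => ?_
    obtain ⟨δ, hδ0, hδ⟩ := huc (ε / 2) (half_pos hε)
    refine le_iSup₂_of_le δ hδ0 ?_
    refine Filter.limsup_le_limsup (Filter.Eventually.of_forall fun n => ?_)
    exact logdiv_mono (coverNum_factor hφ hsurj hcomm hε hδ0 (fun a b hab => hδ hab) n) n
  · refine iSup₂_le fun ε hε => ?_
    obtain ⟨δ, hδ0, hδ⟩ := huc (ε / 2) (half_pos hε)
    refine le_iSup₂_of_le δ hδ0 ?_
    refine Filter.liminf_le_liminf (Filter.Eventually.of_forall fun n => ?_)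
    exact logdiv_mono (coverNum_factor hφ hsurj hcomm hε hδ0 (fun a b hab => hδ hab) n) n
  · refine iSup₂_le fun ε hε => ?_
    obtain ⟨δ, hδ0, hδ⟩ := huc (ε / 2) (half_pos hε)
    refine le_iSup₂_of_le δ hδ0 ?_
    refine sInf_le_sInf ?_
    rintro c ⟨s, hs0, rfl, hzero⟩
    refine ⟨s, hs0, rfl, le_antisymm ?_ zero_le⟩
    rw [← hzero]
    exact iSup₂_mono fun N _ =>
      dynDelta_factor hsurj hcomm hε (fun a b hab => hδ hab) s N
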